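/- Let Y be the n×n matrix with ones on the subdiagonal (Y_{i+1,i} = 1 for 1 ≤ i ≤ n−1) and zeros elsewhere, and let x_n* = (0,…,0,1) be the n-th coordinate row vector. Then for every 0 ≤ k ≤ n−1 one has B_k(Y) = Y^k, and f_k(Y, x_n*, v) = v_{n−k} for every column vector v ∈ k^n. In particular the restrictions of f_0,…,f_{n−1} to the affine slice {(Y, x_n*, v) : v ∈ k^n} are exactly the coordinate functions v_n, v_{n−1}, …, v_1. -/

import Mathlib

open Matrix Polynomial

/-- `Q X j` is defined by `det (t•I - X) = ∑ j, (-1)^j * Q j X * t^(n-j)`. -/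
noncomputable def QQ {R : Type*} [CommRing R] {n : ℕ} (X : Matrix (Fin n) (Fin n) R)
    (j : ℕ) : R :=
  (-1) ^ j * X.charpoly.coeff (n - j)

/-- `B X k = X^k - Q₁(X)•X^(k-1) + Q₂(X)•X^(k-2) - ⋯ + (-1)^k Q_k(X)•I`. -/
noncomputable def BB {R : Type*} [CommRing R] {n : ℕ} (X : Matrix (Fin n) (Fin n) R)
    (k : ℕ) : Matrix (Fin n) (Fin n) R :=
  ∑ i ∈ Finset.range (k + 1), ((-1) ^ i * QQ X i) • X ^ (k - i)

/-- `fdef X λ v k = λ ⬝ B_k(X) ⬝ v`. -/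
noncomputable def fdef {R : Type*} [CommRing R] {n : ℕ} (X : Matrix (Fin n) (Fin n) R)
    (l v : Fin n → R) (k : ℕ) : R :=
  l ⬝ᵥ (BB X k).mulVec v

lemma Ypow {K : Type*} [Field K] {n : ℕ} (k : ℕ) :
    (Matrix.of fun i j : Fin n => if (i : ℕ) = (j : ℕ) + 1 then (1 : K) else 0) ^ k =
      Matrix.of fun i j : Fin n => if (i : ℕ) = (j : ℕ) + k then 1 else 0 := by
  induction k with
  | zero =>
    ext i j
    simp [Matrix.one_apply, Fin.ext_iff]
  | succ k ih =>
    rw [pow_succ, ih]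
    ext i j
    simp only [Matrix.mul_apply, Matrix.of_apply]
    by_cases h : (i : ℕ) = (j : ℕ) + (k + 1)
    · have hj1 : (j : ℕ) + 1 < n := by omega
      rw [Finset.sum_eq_single (⟨(j : ℕ) + 1, hj1⟩ : Fin n)]
      · have h2 : (i:ℕ) = ((j:ℕ)+1) + k := by omega
        simp [h, h2]
        omega
      · intro b _ hb
        have hb' : (b:ℕ) ≠ (j:ℕ)+1 := fun hc => hb (Fin.ext (by simpa using hc))
        simp [hb']
      · simp
    · rw [if_neg h]
      apply Finset.sum_eq_zero
      intro b _
      by_cases h1 : (i : ℕ) = (b : ℕ) + k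
      · by_cases h2 : (b : ℕ) = (j : ℕ) + 1
        · omega
        · simp [h2]
      · simp [h1]

lemma Ycharpoly {K : Type*} [Field K] {n : ℕ} :
    (Matrix.of fun i j : Fin n => if (i : ℕ) = (j : ℕ) + 1 then (1 : K) else 0).charpoly
      = X ^ n := by
  have hnil : IsNilpotent
      (Matrix.of fun i j : Fin n => if (i : ℕ) = (j : ℕ) + 1 then (1 : K) else 0) := by
    refine ⟨n, ?_⟩
    rw [Ypow]
    ext i j
    have : ¬ ((i:ℕ) = (j:ℕ) + n) := by omega
    simp [this]
  have h := Matrix.isNilpotent_charpoly_sub_pow_of_isNilpotent hnil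
  rw [Fintype.card_fin] at h
  exact sub_eq_zero.mp h.eq_zero

/-- for the subdiagonal matrix `Y` (`Y_{i+1,i} = 1`, all other entries `0`)
and the last coordinate row vector `x_n* = (0,…,0,1)`, one has `B_k(Y) = Y^k` for
`0 ≤ k ≤ n-1`, and `f_k(Y, x_n*, v) = v_{n-k}` (1-indexed, i.e. coordinate `n-1-k` in
0-indexing) for every column vector `v`. -/
theorem stmt_4 {K : Type*} [Field K] {n : ℕ} (hn : 1 ≤ n) (k : ℕ) (hk : k ≤ n - 1) :
    BB (Matrix.of fun i j : Fin n => if (i : ℕ) = (j : ℕ) + 1 then (1 : K) else 0) k =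
      (Matrix.of fun i j : Fin n => if (i : ℕ) = (j : ℕ) + 1 then (1 : K) else 0) ^ k ∧
    ∀ v : Fin n → K,
      fdef (Matrix.of fun i j : Fin n => if (i : ℕ) = (j : ℕ) + 1 then (1 : K) else 0)
        (Pi.single (⟨n - 1, by omega⟩ : Fin n) 1) v k = v ⟨n - 1 - k, by omega⟩ := by
  set Y := (Matrix.of fun i j : Fin n => if (i : ℕ) = (j : ℕ) + 1 then (1 : K) else 0)
  have hB : BB Y k = Y ^ k := by
    rw [BB, Finset.sum_eq_single 0]
    · simp [Y, QQ, Ycharpoly, coeff_X_pow]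
    · intro j hj hj0
      have hjn : n - j ≠ n := by
        simp only [Finset.mem_range] at hj
        omega
      have hq : QQ Y j = 0 := by simp [Y, QQ, Ycharpoly, coeff_X_pow, hjn]
      simp [hq]
    · simp
  refine ⟨hB, fun v => ?_⟩
  rw [fdef, hB, single_dotProduct, one_mul, Ypow, Matrix.mulVec, dotProduct]
  have hlt : n - 1 - k < n := by omega
  rw [Finset.sum_eq_single (⟨n - 1 - k, hlt⟩ : Fin n)]
  · simp [dotProduct]
    omega
  · intro b _ hb
    have hb' : ¬ (n - 1 = (b:ℕ) + k) := by
      intro hc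
      exact hb (Fin.ext (by simp; omega))
    simp [hb']
  · simp
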